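/- Let q be a conservative Q-function such that sup{ q(x,t) : x ∈ X, t ∈ [T₀,T₁) } < ∞. Then the transition function P̄ is regular: Σ_{n=0}^∞ P̄⁽ⁿ⁾(u,x;t,X) = 1 for all u ∈ [T₀,T₁), t ∈ (u,T₁), and x ∈ X. -/

import Mathlib

set_option maxHeartbeats 1600000


open MeasureTheory Set Filter Topology
open scoped ENNReal

noncomputable section

/-- A conservative `Q`-function on the state space `X` with time horizon `[T₀, T₁)`,
`T₁ ≤ +∞`.  It is encoded by the kernel `qp x t = q(x, t, · \ {x})`; since `q` is
conservative, the signed measure `q(x,t,·)` is recovered as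
`q(x,t,B) = qp x t B - qp x t univ · 1{x ∈ B}`, so that `q(x,t,X) = 0`. -/
structure ConsQFun (X : Type*) [MeasurableSpace X] (T₀ : ℝ) (T₁ : EReal) where
  qp : X → ℝ → Measure X
  fin : ∀ x t, qp x t Set.univ ≠ ⊤
  diag : ∀ x t, qp x t {x} = 0
  meas : ∀ B : Set X, MeasurableSet B → Measurable fun p : X × ℝ => qp p.1 p.2 B

namespace ConsQFun

variable {X : Type*} [MeasurableSpace X] {T₀ : ℝ} {T₁ : EReal}

/-- The jump rate `q(x,t) = q(x, t, X \ {x})`, as a real number. -/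
def qrate (Q : ConsQFun X T₀ T₁) (x : X) (t : ℝ) : ℝ := (Q.qp x t Set.univ).toReal

/-- `q̄(x) = sup_{t ∈ [T₀,T₁)} q(x,t)`, computed in `ℝ≥0∞`. -/
def qbar (Q : ConsQFun X T₀ T₁) (x : X) : ℝ≥0∞ :=
  ⨆ t ∈ {t : ℝ | T₀ ≤ t ∧ (t : EReal) < T₁}, Q.qp x t Set.univ

/-- Assumption (Feller): there are Borel sets `Bₙ ↑ X` with `sup_{x ∈ Bₙ} q̄(x) < n`
(for `n = 1, 2, …`; here reindexed by `n ↦ n + 1`). -/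
def AssumptionFeller (Q : ConsQFun X T₀ T₁) : Prop :=
  ∃ B : ℕ → Set X, (∀ n, MeasurableSet (B n)) ∧ (∀ n, B n ⊆ B (n + 1)) ∧
    (⋃ n, B n) = Set.univ ∧ ∀ n : ℕ, (⨆ x ∈ B n, Q.qbar x) < (n : ℝ≥0∞) + 1

/-- Assumption (LB): `q̄(x) < ∞` for every `x`. -/
def AssumptionLB (Q : ConsQFun X T₀ T₁) : Prop := ∀ x, Q.qbar x < ⊤

/-- Assumption (ALB): `sup_{t ∈ [T₀,s)} q(x,t) < ∞` for every `x` and `s ∈ (T₀,T₁)`. -/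
def AssumptionALB (Q : ConsQFun X T₀ T₁) : Prop :=
  ∀ (x : X) (s : ℝ), T₀ < s → (s : EReal) < T₁ →
    (⨆ t ∈ Set.Ico T₀ s, Q.qp x t Set.univ) < ⊤

/-- Assumption (L1): `∫_{T₀}^s q(x,t) dt < ∞` for every `x` and `s ∈ (T₀,T₁)`. -/
def AssumptionL1 (Q : ConsQFun X T₀ T₁) : Prop :=
  ∀ (x : X) (s : ℝ), T₀ < s → (s : EReal) < T₁ →
    ∫⁻ t in Set.Ico T₀ s, Q.qp x t Set.univ < ⊤

/-- A set `B` is `(q,s)`-bounded if `q(x,t)` is bounded on `B × [T₀, s)`; for `s = T₁`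
this is the notion of a `q`-bounded set. -/
def QBddOn (Q : ConsQFun X T₀ T₁) (s : EReal) (B : Set X) : Prop :=
  ∃ C : ℝ≥0∞, C ≠ ⊤ ∧ ∀ x ∈ B, ∀ t : ℝ, T₀ ≤ t → (t : EReal) < s → Q.qp x t Set.univ ≤ C

/-- Feller's iterates: `P̄⁽⁰⁾(u,x;t,B) = 1{x∈B} e^{-∫_u^t q(x,s) ds}` and
`P̄⁽ⁿ⁾(u,x;t,B) = ∫_u^t ∫_X e^{-∫_u^w q(x,θ) dθ} P̄⁽ⁿ⁻¹⁾(w,y;t,B) q(x,w,dy∖{x}) dw`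
(the measure `q(x,w, ·∖{x})` is `Q.qp x w`, which has no atom at `x`). -/
def PbarN (Q : ConsQFun X T₀ T₁) : ℕ → ℝ → X → ℝ → Set X → ℝ≥0∞
  | 0 => fun u x t B =>
      B.indicator (fun _ => ENNReal.ofReal (Real.exp (-(∫ s in u..t, Q.qrate x s)))) x
  | n + 1 => fun u x t B =>
      ∫⁻ w in Set.Ioo u t,
        ∫⁻ y, ENNReal.ofReal (Real.exp (-(∫ θ in u..w, Q.qrate x θ))) * Q.PbarN n w y t B
          ∂(Q.qp x w)

/-- The transition function `P̄(u,x;t,B) = Σ_{n=0}^∞ P̄⁽ⁿ⁾(u,x;t,B)`. -/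
def Pbar (Q : ConsQFun X T₀ T₁) (u : ℝ) (x : X) (t : ℝ) (B : Set X) : ℝ≥0∞ :=
  ∑' n, Q.PbarN n u x t B

/-- `P̄` as a real-valued function. -/
def PbarR (Q : ConsQFun X T₀ T₁) (u : ℝ) (x : X) (t : ℝ) (B : Set X) : ℝ :=
  (Q.Pbar u x t B).toReal

end ConsQFun

/-- A real-valued function `f` is absolutely continuous on a set `s ⊆ ℝ`: for every `ε > 0`
there is `δ > 0` such that for every finite collection of nonoverlapping intervals
`(aᵢ, bᵢ)` with endpoints in `s` and total length `< δ`, `Σ |f(bᵢ) - f(aᵢ)| < ε`. -/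
def AbsContinuousOn (f : ℝ → ℝ) (s : Set ℝ) : Prop :=
  ∀ ε > (0 : ℝ), ∃ δ > (0 : ℝ), ∀ (n : ℕ) (a b : ℕ → ℝ),
    (∀ i, i < n → a i ∈ s ∧ b i ∈ s ∧ a i ≤ b i) →
    (∀ i, i < n → ∀ j, j < n → i ≠ j → Disjoint (Set.Ioo (a i) (b i)) (Set.Ioo (a j) (b j))) →
    (∑ i ∈ Finset.range n, (b i - a i)) < δ →
    (∑ i ∈ Finset.range n, |f (b i) - f (a i)|) < ε

namespace PbarRegAux

open ProbabilityTheory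

variable {X : Type*} [MeasurableSpace X] {T₀ : ℝ} {T₁ : EReal}

/-- The truncated kernel: agrees with `Q.qp` wherever the total mass is at most `C`. -/
def trKer (Q : ConsQFun X T₀ T₁) (C : ℝ≥0∞) : Kernel (X × ℝ) X where
  toFun := fun p => if Q.qp p.1 p.2 Set.univ ≤ C then Q.qp p.1 p.2 else 0
  measurable' := by
    refine Measure.measurable_of_measurable_coe _ fun B hB => ?_
    have : (fun p : X × ℝ =>
        (if Q.qp p.1 p.2 Set.univ ≤ C then Q.qp p.1 p.2 else (0 : Measure X)) B)
        = fun p => if Q.qp p.1 p.2 Set.univ ≤ C then Q.qp p.1 p.2 B else 0 := by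
      funext p; split <;> simp
    rw [this]
    exact Measurable.ite (measurableSet_le (Q.meas _ MeasurableSet.univ) measurable_const)
      (Q.meas B hB) measurable_const

lemma trKer_apply (Q : ConsQFun X T₀ T₁) (C : ℝ≥0∞) {x : X} {w : ℝ}
    (h : Q.qp x w Set.univ ≤ C) : trKer Q C (x, w) = Q.qp x w := by
  show (if Q.qp x w Set.univ ≤ C then Q.qp x w else 0) = Q.qp x w
  exact if_pos h

lemma trKer_univ_le (Q : ConsQFun X T₀ T₁) (C : ℝ≥0∞) (p : X × ℝ) :
    trKer Q C p Set.univ ≤ C := by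
  show (if Q.qp p.1 p.2 Set.univ ≤ C then Q.qp p.1 p.2 else 0) Set.univ ≤ C
  split
  · assumption
  · simp

lemma isFiniteKernel_trKer (Q : ConsQFun X T₀ T₁) {C : ℝ≥0∞} (hC : C ≠ ⊤) :
    IsFiniteKernel (trKer Q C) :=
  ⟨⟨C, hC.lt_top, fun p => trKer_univ_le Q C p⟩⟩

/-- The exponential factor `e^{-∫_u^w q(x,θ)dθ}` as an element of `ℝ≥0∞`. -/
def Ee (Q : ConsQFun X T₀ T₁) (x : X) (u w : ℝ) : ℝ≥0∞ :=
  ENNReal.ofReal (Real.exp (-(∫ θ in u..w, Q.qrate x θ)))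

lemma qrate_nonneg (Q : ConsQFun X T₀ T₁) (x : X) (w : ℝ) : 0 ≤ Q.qrate x w :=
  ENNReal.toReal_nonneg

lemma Ee_le_one (Q : ConsQFun X T₀ T₁) (x : X) {u w : ℝ} (h : u ≤ w) :
    Ee Q x u w ≤ 1 := by
  have h0 : 0 ≤ ∫ θ in u..w, Q.qrate x θ :=
    intervalIntegral.integral_nonneg h (fun θ _ => qrate_nonneg Q x θ)
  rw [Ee, ← ENNReal.ofReal_one]
  exact ENNReal.ofReal_le_ofReal (Real.exp_le_one_iff.2 (neg_nonpos.2 h0))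

/-- Feller's iterates, with the truncated kernel, for `B = univ`, target time `t`. -/
def Pb (Q : ConsQFun X T₀ T₁) (C : ℝ≥0∞) (t : ℝ) : ℕ → ℝ → X → ℝ≥0∞
  | 0 => fun u x => Ee Q x u t
  | n + 1 => fun u x =>
      ∫⁻ w in Set.Ioo u t, ∫⁻ y, Ee Q x u w * Pb Q C t n w y ∂(trKer Q C (x, w))

/-- The remainder terms. -/
def rm (Q : ConsQFun X T₀ T₁) (C : ℝ≥0∞) (t : ℝ) : ℕ → ℝ → X → ℝ≥0∞
  | 0 => fun u x => 1 - Ee Q x u t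
  | n + 1 => fun u x =>
      ∫⁻ w in Set.Ioo u t, ∫⁻ y, Ee Q x u w * rm Q C t n w y ∂(trKer Q C (x, w))

lemma measurable_qrate (Q : ConsQFun X T₀ T₁) :
    Measurable fun p : X × ℝ => Q.qrate p.1 p.2 :=
  (Q.meas _ MeasurableSet.univ).ennreal_toReal

lemma measurable_setInt (Q : ConsQFun X T₀ T₁) {α : Type*} [MeasurableSpace α]
    {a b : α → ℝ} {g : α → X} (ha : Measurable a) (hb : Measurable b) (hg : Measurable g) :
    Measurable fun q : α => ∫ θ in Set.Ioc (a q) (b q), Q.qrate (g q) θ := by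
  have h1 : ∀ q, (∫ θ in Set.Ioc (a q) (b q), Q.qrate (g q) θ)
      = ∫ θ, (Set.Ioc (a q) (b q)).indicator (fun θ => Q.qrate (g q) θ) θ := by
    intro q; rw [MeasureTheory.integral_indicator measurableSet_Ioc]
  simp_rw [h1]
  have hsm : StronglyMeasurable fun p : α × ℝ =>
      (Set.Ioc (a p.1) (b p.1)).indicator (fun θ => Q.qrate (g p.1) θ) p.2 := by
    apply Measurable.stronglyMeasurable
    have h2 : (fun p : α × ℝ =>
        (Set.Ioc (a p.1) (b p.1)).indicator (fun θ => Q.qrate (g p.1) θ) p.2)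
        = fun p => if a p.1 < p.2 ∧ p.2 ≤ b p.1 then Q.qrate (g p.1) p.2 else 0 := by
      funext p; simp [Set.indicator_apply, Set.mem_Ioc]
    rw [h2]
    refine Measurable.ite ?_ ?_ measurable_const
    · exact MeasurableSet.inter
        (measurableSet_lt (ha.comp measurable_fst) measurable_snd)
        (measurableSet_le measurable_snd (hb.comp measurable_fst))
    · exact (measurable_qrate Q).comp ((hg.comp measurable_fst).prodMk measurable_snd)
  exact (hsm.integral_prod_right').measurable

lemma measurable_Ee (Q : ConsQFun X T₀ T₁) :
    Measurable fun q : (ℝ × ℝ) × X => Ee Q q.2 q.1.1 q.1.2 := by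
  have h : Measurable fun q : (ℝ × ℝ) × X => ∫ θ in q.1.1..q.1.2, Q.qrate q.2 θ := by
    simp_rw [intervalIntegral]
    exact (measurable_setInt Q (measurable_fst.fst) (measurable_fst.snd) measurable_snd).sub
      (measurable_setInt Q (measurable_fst.snd) (measurable_fst.fst) measurable_snd)
  exact ENNReal.measurable_ofReal.comp (Real.measurable_exp.comp h.neg)

lemma measurable_inner' (Q : ConsQFun X T₀ T₁) {C : ℝ≥0∞} (hC : C ≠ ⊤) (t : ℝ)
    {h : ℝ × X → ℝ≥0∞} (hh : Measurable h) :
    Measurable fun r : (ℝ × X) × ℝ =>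
      ∫⁻ y, Ee Q r.1.2 r.1.1 r.2 * h (r.2, y) ∂(trKer Q C (r.1.2, r.2)) := by
  haveI := isFiniteKernel_trKer Q hC
  have hm : Measurable fun r : (ℝ × X) × ℝ => (r.1.2, r.2) :=
    (measurable_fst.snd).prodMk measurable_snd
  have hproj1 : Measurable fun p : ((ℝ × X) × ℝ) × X => ((p.1.1.1, p.1.2), p.1.1.2) := by
    fun_prop
  have hproj2 : Measurable fun p : ((ℝ × X) × ℝ) × X => (p.1.2, p.2) := by fun_prop
  have hEe0 := Measurable.comp (measurable_Ee Q) hproj1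
  have hEe : Measurable fun p : ((ℝ × X) × ℝ) × X => Ee Q p.1.1.2 p.1.1.1 p.1.2 := hEe0
  have hh20 := Measurable.comp hh hproj2
  have hh2 : Measurable fun p : ((ℝ × X) × ℝ) × X => h (p.1.2, p.2) := hh20
  have hint : Measurable fun p : ((ℝ × X) × ℝ) × X =>
      Ee Q p.1.1.2 p.1.1.1 p.1.2 * h (p.1.2, p.2) := hEe.mul hh2
  have h2 := Measurable.lintegral_kernel_prod_right'
    (κ := (trKer Q C).comap (fun r : (ℝ × X) × ℝ => (r.1.2, r.2)) hm) hint
  simp_rw [Kernel.comap_apply] at h2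
  exact h2

lemma measurable_inner (Q : ConsQFun X T₀ T₁) {C : ℝ≥0∞} (hC : C ≠ ⊤) (t : ℝ)
    {h : ℝ × X → ℝ≥0∞} (hh : Measurable h) (u : ℝ) (x : X) :
    Measurable fun w : ℝ => ∫⁻ y, Ee Q x u w * h (w, y) ∂(trKer Q C (x, w)) := by
  have hproj : Measurable fun w : ℝ => (((u, x), w) : (ℝ × X) × ℝ) := by fun_prop
  have h0 := Measurable.comp (measurable_inner' Q hC t hh) hproj
  exact h0

lemma measurable_step (Q : ConsQFun X T₀ T₁) {C : ℝ≥0∞} (hC : C ≠ ⊤) (t : ℝ)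
    {h : ℝ × X → ℝ≥0∞} (hh : Measurable h) :
    Measurable fun p : ℝ × X =>
      ∫⁻ w in Set.Ioo p.1 t, ∫⁻ y, Ee Q p.2 p.1 w * h (w, y) ∂(trKer Q C (p.2, w)) := by
  have h1 := measurable_inner' Q hC t hh
  have h2 : Measurable fun r : (ℝ × X) × ℝ =>
      (Set.Ioo r.1.1 t).indicator
        (fun w => ∫⁻ y, Ee Q r.1.2 r.1.1 w * h (w, y) ∂(trKer Q C (r.1.2, w))) r.2 := by
    have heq : (fun r : (ℝ × X) × ℝ =>
        (Set.Ioo r.1.1 t).indicator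
          (fun w => ∫⁻ y, Ee Q r.1.2 r.1.1 w * h (w, y) ∂(trKer Q C (r.1.2, w))) r.2)
        = fun r => if r.1.1 < r.2 ∧ r.2 < t then
            ∫⁻ y, Ee Q r.1.2 r.1.1 r.2 * h (r.2, y) ∂(trKer Q C (r.1.2, r.2)) else 0 := by
      funext r; simp [Set.indicator_apply, Set.mem_Ioo]
    rw [heq]
    refine Measurable.ite ?_ h1 measurable_const
    exact MeasurableSet.inter
      (measurableSet_lt (measurable_fst.comp measurable_fst) measurable_snd)
      (measurableSet_lt measurable_snd measurable_const)
  have h3 : Measurable fun p : ℝ × X => ∫⁻ w : ℝ,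
      (Set.Ioo p.1 t).indicator
        (fun w => ∫⁻ y, Ee Q p.2 p.1 w * h (w, y) ∂(trKer Q C (p.2, w))) w :=
    Measurable.lintegral_prod_right' h2
  have heq2 : (fun p : ℝ × X =>
      ∫⁻ w in Set.Ioo p.1 t, ∫⁻ y, Ee Q p.2 p.1 w * h (w, y) ∂(trKer Q C (p.2, w)))
      = fun p : ℝ × X => ∫⁻ w,
        (Set.Ioo p.1 t).indicator
          (fun w => ∫⁻ y, Ee Q p.2 p.1 w * h (w, y) ∂(trKer Q C (p.2, w))) w := by
    funext p; rw [lintegral_indicator measurableSet_Ioo]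
  rw [heq2]
  exact h3

lemma measurable_Pb (Q : ConsQFun X T₀ T₁) {C : ℝ≥0∞} (hC : C ≠ ⊤) (t : ℝ) :
    ∀ n, Measurable fun p : ℝ × X => Pb Q C t n p.1 p.2 := by
  intro n
  induction n with
  | zero =>
    have hproj : Measurable fun p : ℝ × X => (((p.1, t), p.2) : (ℝ × ℝ) × X) := by fun_prop
    have h0 := Measurable.comp (measurable_Ee Q) hproj
    exact h0
  | succ n ih => exact measurable_step Q hC t ih

lemma measurable_rm (Q : ConsQFun X T₀ T₁) {C : ℝ≥0∞} (hC : C ≠ ⊤) (t : ℝ) :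
    ∀ n, Measurable fun p : ℝ × X => rm Q C t n p.1 p.2 := by
  intro n
  induction n with
  | zero =>
    have hproj : Measurable fun p : ℝ × X => (((p.1, t), p.2) : (ℝ × ℝ) × X) := by fun_prop
    have h0 := Measurable.comp (measurable_Ee Q) hproj
    have h1 : Measurable fun p : ℝ × X => Ee Q p.2 p.1 t := h0
    exact measurable_const.sub h1
  | succ n ih => exact measurable_step Q hC t ih

/-- Lipschitz estimate for `exp(-·)` on nonnegative reals. -/
lemma exp_neg_lip {a b : ℝ} (ha : 0 ≤ a) (hb : 0 ≤ b) :
    |Real.exp (-a) - Real.exp (-b)| ≤ |a - b| := by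
  wlog h : b ≤ a generalizing a b
  · rw [abs_sub_comm, abs_sub_comm a b]; exact this hb ha (le_of_not_ge h)
  have e1 : 1 - (a - b) ≤ Real.exp (-(a - b)) := by
    have := Real.add_one_le_exp (-(a - b)); linarith
  have e2 : Real.exp (-b) ≤ 1 := Real.exp_le_one_iff.2 (neg_nonpos.2 hb)
  have e3 : Real.exp (-a) = Real.exp (-b) * Real.exp (-(a - b)) := by
    rw [← Real.exp_add]; ring_nf
  have e4 : (0 : ℝ) < Real.exp (-b) := Real.exp_pos _
  have e5 : Real.exp (-(a - b)) ≤ 1 := Real.exp_le_one_iff.2 (by linarith)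
  rw [abs_of_nonpos (by nlinarith), abs_of_nonneg (by linarith)]
  nlinarith

/-- Key integral identity for globally integrable, nonnegative, measurable `f`:
`∫_u^t f(w) e^{-∫_u^w f} dw = 1 - e^{-∫_u^t f}`. -/
lemma keyA {f : ℝ → ℝ} (hfm : Measurable f) (hf0 : ∀ w, 0 ≤ f w)
    (hfi : MeasureTheory.Integrable f) {u t : ℝ} (hut : u ≤ t) :
    (∫ w in Set.Ioo u t, f w * Real.exp (-(∫ θ in u..w, f θ)))
      = 1 - Real.exp (-(∫ θ in u..t, f θ)) := by
  set F : ℝ → ℝ := fun w => ∫ θ in u..w, f θ with hFdef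
  have hFc : Continuous F := hfi.continuous_primitive u
  have hF0 : ∀ w, u ≤ w → 0 ≤ F w := fun w hw =>
    intervalIntegral.integral_nonneg hw (fun θ _ => hf0 θ)
  have hIf : IntegrableOn (fun w => f w * Real.exp (-(F w))) (Set.Ioo u t) := by
    refine Integrable.mono' hfi.integrableOn
      ((hfm.aestronglyMeasurable).mul
        ((Real.continuous_exp.comp hFc.neg).aestronglyMeasurable)) ?_
    filter_upwards [self_mem_ae_restrict measurableSet_Ioo] with w hw
    rw [Real.norm_eq_abs, abs_mul, abs_of_nonneg (hf0 w), abs_of_nonneg (Real.exp_pos _).le]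
    calc f w * Real.exp (-(F w)) ≤ f w * 1 :=
          mul_le_mul_of_nonneg_left
            (Real.exp_le_one_iff.2 (neg_nonpos.2 (hF0 w hw.1.le))) (hf0 w)
      _ = f w := mul_one _
  have hfint0 : 0 ≤ ∫ w, f w := integral_nonneg hf0
  set M : ℝ := 3 + ∫ w, f w with hMdef
  have hM : 0 < M := by linarith
  set L : ℝ := ∫ w in Set.Ioo u t, f w * Real.exp (-(F w)) with hLdef
  set R : ℝ := 1 - Real.exp (-(F t)) with hRdef
  have main : ∀ ε : ℝ, 0 < ε → ε ≤ 1 → |L - R| ≤ ε * M := by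
    intro ε hε hε1
    obtain ⟨g, -, hgL1, hgc, hgi⟩ := hfi.exists_hasCompactSupport_integral_sub_le hε
    set g' : ℝ → ℝ := fun w => max (g w) 0 with hg'def
    have hg'c : Continuous g' := hgc.max continuous_const
    have hg'0 : ∀ w, 0 ≤ g' w := fun w => le_max_right _ _
    have hg'i : MeasureTheory.Integrable g' := hgi.sup (integrable_zero _ _ _)
    have hptw : ∀ w, |f w - g' w| ≤ |f w - g w| := by
      intro w
      rcases le_or_gt 0 (g w) with h | h
      · rw [hg'def]; simp only [max_eq_left h]; exact le_rfl
      · have h1 : g' w = 0 := by rw [hg'def]; simp only [max_eq_right h.le]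
        rw [h1, sub_zero, abs_of_nonneg (hf0 w)]
        have := le_abs_self (f w - g w)
        linarith
    have hsub_i : MeasureTheory.Integrable (fun w => |f w - g w|) := (hfi.sub hgi).abs
    have hsub'_i : MeasureTheory.Integrable (fun w => |f w - g' w|) := (hfi.sub hg'i).abs
    have hL1' : (∫ w, |f w - g' w|) ≤ ε := by
      refine le_trans (integral_mono hsub'_i hsub_i hptw) ?_
      simpa [Real.norm_eq_abs] using hgL1
    set G : ℝ → ℝ := fun w => ∫ θ in u..w, g' θ with hGdef
    have hGd : ∀ w, HasDerivAt G (g' w) w := fun w =>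
      intervalIntegral.integral_hasDerivAt_right (hg'c.intervalIntegrable _ _)
        (hg'c.stronglyMeasurableAtFilter _ _) hg'c.continuousAt
    have hGc : Continuous G := hg'i.continuous_primitive u
    have hG0 : ∀ w, u ≤ w → 0 ≤ G w := fun w hw =>
      intervalIntegral.integral_nonneg hw (fun θ _ => hg'0 θ)
    have hFG : ∀ w, u ≤ w → |F w - G w| ≤ ε := by
      intro w hw
      have hsub : F w - G w = ∫ θ in u..w, (f θ - g' θ) :=
        (intervalIntegral.integral_sub hfi.intervalIntegrable
          hg'i.intervalIntegrable).symm
      rw [hsub]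
      calc |∫ θ in u..w, (f θ - g' θ)| ≤ ∫ θ in u..w, |f θ - g' θ| :=
            intervalIntegral.abs_integral_le_integral_abs hw
        _ = ∫ θ in Set.Ioc u w, |f θ - g' θ| := intervalIntegral.integral_of_le hw
        _ ≤ ∫ θ, |f θ - g' θ| :=
            setIntegral_le_integral hsub'_i (ae_of_all _ fun θ => abs_nonneg _)
        _ ≤ ε := hL1'
    have hHd : ∀ w, HasDerivAt (fun w => -Real.exp (-(G w)))
        (g' w * Real.exp (-(G w))) w := by
      intro w
      have h1 : HasDerivAt (fun w => -(G w)) (-(g' w)) w := (hGd w).neg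
      have h2 := h1.exp
      have h3 : HasDerivAt (fun w => -Real.exp (-(G w))) _ w := h2.neg
      convert h3 using 1
      ring
    have hintg : IntervalIntegrable (fun w => g' w * Real.exp (-(G w))) volume u t :=
      (hg'c.mul (Real.continuous_exp.comp hGc.neg)).intervalIntegrable _ _
    have hFTC : (∫ w in u..t, g' w * Real.exp (-(G w))) = 1 - Real.exp (-(G t)) := by
      rw [intervalIntegral.integral_eq_sub_of_hasDerivAt (fun w _ => hHd w) hintg]
      have hGu : G u = 0 := intervalIntegral.integral_same
      rw [hGu]
      simp only [neg_zero, Real.exp_zero]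
      ring
    have hLg : (∫ w in Set.Ioo u t, g' w * Real.exp (-(G w))) = 1 - Real.exp (-(G t)) := by
      rw [← hFTC, intervalIntegral.integral_of_le hut,
        MeasureTheory.integral_Ioc_eq_integral_Ioo]
    have hIg : IntegrableOn (fun w => g' w * Real.exp (-(G w))) (Set.Ioo u t) :=
      ((hg'c.mul (Real.continuous_exp.comp hGc.neg)).integrableOn_Icc).mono_set
        Set.Ioo_subset_Icc_self
    have hg'bound : (∫ w, g' w) ≤ (∫ w, f w) + ε := by
      have hpt : ∀ w, g' w ≤ f w + |f w - g' w| := by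
        intro w
        have := le_abs_self (g' w - f w)
        rw [abs_sub_comm] at this
        linarith
      calc (∫ w, g' w) ≤ ∫ w, (f w + |f w - g' w|) :=
            integral_mono hg'i (hfi.add hsub'_i) hpt
        _ = (∫ w, f w) + ∫ w, |f w - g' w| := integral_add hfi hsub'_i
        _ ≤ (∫ w, f w) + ε := by linarith
    have hdiff : |L - (1 - Real.exp (-(G t)))| ≤ ε + ε * ((∫ w, f w) + 1) := by
      rw [hLdef, ← hLg, ← integral_sub hIf hIg]
      have hptw2 : ∀ w ∈ Set.Ioo u t,
          |f w * Real.exp (-(F w)) - g' w * Real.exp (-(G w))|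
            ≤ |f w - g' w| + g' w * ε := by
        intro w hw
        have hFw : 0 ≤ F w := hF0 w hw.1.le
        have hGw : 0 ≤ G w := hG0 w hw.1.le
        have hexp1 : Real.exp (-(F w)) ≤ 1 := Real.exp_le_one_iff.2 (neg_nonpos.2 hFw)
        have hexp2 : |Real.exp (-(F w)) - Real.exp (-(G w))| ≤ ε :=
          le_trans (exp_neg_lip hFw hGw) (hFG w hw.1.le)
        have hsplit : f w * Real.exp (-(F w)) - g' w * Real.exp (-(G w))
            = (f w - g' w) * Real.exp (-(F w))
              + g' w * (Real.exp (-(F w)) - Real.exp (-(G w))) := by ring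
        rw [hsplit]
        calc |(f w - g' w) * Real.exp (-(F w))
              + g' w * (Real.exp (-(F w)) - Real.exp (-(G w)))|
            ≤ |(f w - g' w) * Real.exp (-(F w))|
              + |g' w * (Real.exp (-(F w)) - Real.exp (-(G w)))| := abs_add_le _ _
          _ = |f w - g' w| * Real.exp (-(F w))
              + g' w * |Real.exp (-(F w)) - Real.exp (-(G w))| := by
              rw [abs_mul, abs_mul, abs_of_nonneg (Real.exp_pos _).le,
                abs_of_nonneg (hg'0 w)]
          _ ≤ |f w - g' w| * 1 + g' w * ε := by gcongr
          _ = |f w - g' w| + g' w * ε := by ring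
      calc |∫ w in Set.Ioo u t,
            (f w * Real.exp (-(F w)) - g' w * Real.exp (-(G w)))|
          ≤ ∫ w in Set.Ioo u t,
            |f w * Real.exp (-(F w)) - g' w * Real.exp (-(G w))| := by
            simpa [Real.norm_eq_abs] using
              norm_integral_le_integral_norm (μ := volume.restrict (Set.Ioo u t))
                (fun w => f w * Real.exp (-(F w)) - g' w * Real.exp (-(G w)))
        _ ≤ ∫ w in Set.Ioo u t, (|f w - g' w| + g' w * ε) := by
            refine setIntegral_mono_on (hIf.sub hIg).abs ?_ measurableSet_Ioo hptw2
            exact hsub'_i.integrableOn.add (hg'i.integrableOn.mul_const ε)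
        _ = (∫ w in Set.Ioo u t, |f w - g' w|)
            + ∫ w in Set.Ioo u t, g' w * ε :=
            integral_add hsub'_i.integrableOn (hg'i.integrableOn.mul_const ε)
        _ ≤ ε + ε * ((∫ w, f w) + 1) := by
            have h1 : (∫ w in Set.Ioo u t, |f w - g' w|) ≤ ∫ w, |f w - g' w| :=
              setIntegral_le_integral hsub'_i (ae_of_all _ fun θ => abs_nonneg _)
            have h2 : (∫ w in Set.Ioo u t, g' w * ε) = (∫ w in Set.Ioo u t, g' w) * ε :=
              integral_mul_const ε _
            have h3 : (∫ w in Set.Ioo u t, g' w) ≤ ∫ w, g' w :=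
              setIntegral_le_integral hg'i (ae_of_all _ fun θ => hg'0 θ)
            have h4 : (∫ w in Set.Ioo u t, g' w) * ε ≤ ((∫ w, f w) + 1) * ε := by
              have : (∫ w, g' w) ≤ (∫ w, f w) + 1 := by linarith
              exact mul_le_mul_of_nonneg_right (by linarith) hε.le
            nlinarith [hL1']
    have hRd : |(1 - Real.exp (-(G t))) - R| ≤ ε := by
      rw [hRdef]
      have : (1 - Real.exp (-(G t))) - (1 - Real.exp (-(F t)))
          = Real.exp (-(F t)) - Real.exp (-(G t)) := by ring
      rw [this]
      exact le_trans (exp_neg_lip (hF0 t hut) (hG0 t hut)) (hFG t hut)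
    calc |L - R| ≤ |L - (1 - Real.exp (-(G t)))| + |(1 - Real.exp (-(G t))) - R| :=
          abs_sub_le _ _ _
      _ ≤ (ε + ε * ((∫ w, f w) + 1)) + ε := add_le_add hdiff hRd
      _ = ε * M := by rw [hMdef]; ring
  have hD : ∀ ε : ℝ, 0 < ε → |L - R| ≤ ε * M := by
    intro ε hε
    rcases le_or_gt ε 1 with h | h
    · exact main ε hε h
    · exact le_trans (main 1 one_pos le_rfl) (by nlinarith)
  have hzero : |L - R| ≤ 0 := by
    by_contra hcon
    push_neg at hcon
    have h1 := hD (|L - R| / (2 * M)) (div_pos hcon (by linarith))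
    have h2 : |L - R| / (2 * M) * M = |L - R| / 2 := by
      field_simp
    rw [h2] at h1
    linarith
  have h5 : |L - R| = 0 := le_antisymm hzero (abs_nonneg _)
  have h6 := abs_eq_zero.1 h5
  show L = R
  linarith

section Main

variable (Q : ConsQFun X T₀ T₁) {C : ℝ≥0∞} {t : ℝ}

lemma integrableOn_qrate (hC : C ≠ ⊤)
    (hb : ∀ (x : X) (w : ℝ), T₀ ≤ w → (w : EReal) < T₁ → Q.qp x w Set.univ ≤ C)
    (ht : (t : EReal) < T₁) (x : X) {u : ℝ} (hu : T₀ ≤ u) :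
    IntegrableOn (Q.qrate x) (Set.Ioc u t) := by
  have hm : Measurable fun w => Q.qrate x w :=
    (measurable_qrate Q).comp measurable_prodMk_left
  refine Integrable.mono' (g := fun _ => C.toReal)
    (integrableOn_const measure_Ioc_lt_top.ne) hm.aestronglyMeasurable ?_
  filter_upwards [self_mem_ae_restrict measurableSet_Ioc] with w hw
  rw [Real.norm_eq_abs, abs_of_nonneg (qrate_nonneg Q x w)]
  refine ENNReal.toReal_mono hC (hb x w (hu.trans hw.1.le) ?_)
  exact lt_of_le_of_lt (EReal.coe_le_coe_iff.2 hw.2) ht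

/-- The one-step renewal identity. -/
lemma keyB (hC : C ≠ ⊤)
    (hb : ∀ (x : X) (w : ℝ), T₀ ≤ w → (w : EReal) < T₁ → Q.qp x w Set.univ ≤ C)
    (ht : (t : EReal) < T₁) (x : X) {u : ℝ} (hu : T₀ ≤ u) (hut : u < t) :
    Ee Q x u t + (∫⁻ w in Set.Ioo u t,
      Ee Q x u w * (trKer Q C (x, w)) Set.univ) = 1 := by
  set f : ℝ → ℝ := fun w => Q.qrate x w with hfdef
  have hfm : Measurable f := (measurable_qrate Q).comp measurable_prodMk_left
  have hfio : IntegrableOn f (Set.Ioc u t) := integrableOn_qrate Q hC hb ht x hu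
  set f' : ℝ → ℝ := (Set.Ioc u t).indicator f with hf'def
  have hf'm : Measurable f' := hfm.indicator measurableSet_Ioc
  have hf'0 : ∀ w, 0 ≤ f' w := fun w => by
    rw [hf'def]
    exact Set.indicator_nonneg (fun θ _ => qrate_nonneg Q x θ) w
  have hf'i : MeasureTheory.Integrable f' :=
    (integrable_indicator_iff measurableSet_Ioc).2 hfio
  have hFeq : ∀ w ∈ Set.Icc u t, (∫ θ in u..w, f' θ) = ∫ θ in u..w, f θ := by
    intro w hw
    rw [intervalIntegral.integral_of_le hw.1, intervalIntegral.integral_of_le hw.1]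
    refine setIntegral_congr_fun measurableSet_Ioc (fun θ hθ => ?_)
    rw [hf'def]
    exact Set.indicator_of_mem (Set.mem_Ioc.2 ⟨hθ.1, hθ.2.trans hw.2⟩) f
  have hA := keyA hf'm hf'0 hf'i hut.le
  have hreal : (∫ w in Set.Ioo u t, f w * Real.exp (-(∫ θ in u..w, f θ)))
      = 1 - Real.exp (-(∫ θ in u..t, f θ)) := by
    rw [← hFeq t ⟨hut.le, le_rfl⟩, ← hA]
    refine setIntegral_congr_fun measurableSet_Ioo (fun w hw => ?_)
    have hw' : w ∈ Set.Ioc u t := Set.mem_Ioc.2 ⟨hw.1, hw.2.le⟩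
    rw [hFeq w ⟨hw.1.le, hw.2.le⟩]
    congr 1
    rw [hf'def]
    exact (Set.indicator_of_mem hw' f).symm
  have hFc : Continuous fun w => ∫ θ in u..w, f' θ := hf'i.continuous_primitive u
  have hintegrand : IntegrableOn (fun w => f w * Real.exp (-(∫ θ in u..w, f θ)))
      (Set.Ioo u t) := by
    refine Integrable.mono' (hfio.mono_set Set.Ioo_subset_Ioc_self)
      ?_ ?_
    · refine AEStronglyMeasurable.mul hfm.aestronglyMeasurable ?_
      have hcont2 : Continuous fun w => Real.exp (-(∫ θ in u..w, f' θ)) :=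
        Real.continuous_exp.comp hFc.neg
      have heqF : (fun w => Real.exp (-(∫ θ in u..w, f' θ)))
          =ᵐ[volume.restrict (Set.Ioo u t)]
          (fun w => Real.exp (-(∫ θ in u..w, f θ))) := by
        filter_upwards [self_mem_ae_restrict measurableSet_Ioo] with w hw
        rw [hFeq w ⟨hw.1.le, hw.2.le⟩]
      exact AEStronglyMeasurable.congr hcont2.aestronglyMeasurable.restrict heqF
    · filter_upwards [self_mem_ae_restrict measurableSet_Ioo] with w hw
      have h0 : 0 ≤ ∫ θ in u..w, f θ :=
        intervalIntegral.integral_nonneg hw.1.le (fun θ _ => qrate_nonneg Q x θ)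
      rw [Real.norm_eq_abs, abs_mul, abs_of_nonneg (qrate_nonneg Q x w),
        abs_of_nonneg (Real.exp_pos _).le]
      calc f w * Real.exp (-(∫ θ in u..w, f θ)) ≤ f w * 1 :=
            mul_le_mul_of_nonneg_left
              (Real.exp_le_one_iff.2 (neg_nonpos.2 h0)) (qrate_nonneg Q x w)
        _ = f w := mul_one _
  have hlin : (∫⁻ w in Set.Ioo u t, Ee Q x u w * (trKer Q C (x, w)) Set.univ)
      = ENNReal.ofReal (1 - Real.exp (-(∫ θ in u..t, f θ))) := by
    have hcongr : (∫⁻ w in Set.Ioo u t, Ee Q x u w * (trKer Q C (x, w)) Set.univ)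
        = ∫⁻ w in Set.Ioo u t,
          ENNReal.ofReal (f w * Real.exp (-(∫ θ in u..w, f θ))) := by
      refine setLIntegral_congr_fun measurableSet_Ioo (fun w hw => ?_)
      have hwT : T₀ ≤ w := hu.trans hw.1.le
      have hwT1 : (w : EReal) < T₁ := lt_of_le_of_lt (EReal.coe_le_coe_iff.2 hw.2.le) ht
      rw [trKer_apply Q C (hb x w hwT hwT1)]
      have hqp : Q.qp x w Set.univ = ENNReal.ofReal (f w) := by
        rw [hfdef]
        exact (ENNReal.ofReal_toReal (Q.fin x w)).symm
      rw [hqp, Ee, ← ENNReal.ofReal_mul (Real.exp_pos _).le]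
      rw [mul_comm]
    rw [hcongr, ← MeasureTheory.ofReal_integral_eq_lintegral_ofReal hintegrand ?_, hreal]
    filter_upwards [self_mem_ae_restrict measurableSet_Ioo] with w hw
    exact mul_nonneg (qrate_nonneg Q x w) (Real.exp_pos _).le
  rw [hlin, Ee, ← ENNReal.ofReal_add (Real.exp_pos _).le ?_, ← ENNReal.ofReal_one]
  · congr 1; ring
  · have h0 : 0 ≤ ∫ θ in u..t, f θ :=
      intervalIntegral.integral_nonneg hut.le (fun θ _ => qrate_nonneg Q x θ)
    have := Real.exp_le_one_iff.2 (neg_nonpos.2 h0)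
    linarith

/-- Partial sums plus remainder equal one. -/
lemma sum_add_rm (hC : C ≠ ⊤)
    (hb : ∀ (x : X) (w : ℝ), T₀ ≤ w → (w : EReal) < T₁ → Q.qp x w Set.univ ≤ C)
    (ht : (t : EReal) < T₁) :
    ∀ (N : ℕ) (u : ℝ) (x : X), T₀ ≤ u → u < t →
      (∑ n ∈ Finset.range (N + 1), Pb Q C t n u x) + rm Q C t N u x = 1 := by
  intro N
  induction N with
  | zero =>
    intro u x hu hut
    simp only [zero_add, Finset.sum_range_one]
    show Pb Q C t 0 u x + (1 - Pb Q C t 0 u x) = 1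
    exact add_tsub_cancel_of_le (Ee_le_one Q x hut.le)
  | succ N ih =>
    intro u x hu hut
    have hSmeas : Measurable fun p : ℝ × X =>
        ∑ n ∈ Finset.range (N + 1), Pb Q C t n p.1 p.2 :=
      Finset.measurable_sum _ (fun n _ => measurable_Pb Q hC t n)
    have hsum : (∑ i ∈ Finset.range (N + 1), Pb Q C t (i + 1) u x)
        = ∫⁻ w in Set.Ioo u t, ∫⁻ y,
            Ee Q x u w * (∑ n ∈ Finset.range (N + 1), Pb Q C t n w y)
              ∂(trKer Q C (x, w)) := by
      calc (∑ i ∈ Finset.range (N + 1), Pb Q C t (i + 1) u x)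
          = ∑ i ∈ Finset.range (N + 1), ∫⁻ w in Set.Ioo u t,
              ∫⁻ y, Ee Q x u w * Pb Q C t i w y ∂(trKer Q C (x, w)) := rfl
        _ = ∫⁻ w in Set.Ioo u t, ∑ i ∈ Finset.range (N + 1),
              ∫⁻ y, Ee Q x u w * Pb Q C t i w y ∂(trKer Q C (x, w)) :=
            (lintegral_finset_sum' _ (fun i _ =>
              (measurable_inner Q hC t (measurable_Pb Q hC t i) u x).aemeasurable)).symm
        _ = ∫⁻ w in Set.Ioo u t, ∫⁻ y,
              Ee Q x u w * (∑ n ∈ Finset.range (N + 1), Pb Q C t n w y)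
                ∂(trKer Q C (x, w)) := by
            refine lintegral_congr fun w => ?_
            have hmeas_i : ∀ i : ℕ, Measurable fun y => Ee Q x u w * Pb Q C t i w y := by
              intro i
              have h0 := Measurable.comp (measurable_Pb Q hC t i)
                (measurable_prodMk_left (x := w))
              have h1 : Measurable fun y => Pb Q C t i w y := h0
              exact h1.const_mul _
            rw [← lintegral_finset_sum' _ (fun i _ => (hmeas_i i).aemeasurable)]
            refine lintegral_congr fun y => ?_
            rw [Finset.mul_sum]
    have hinner_meas : Measurable fun w => ∫⁻ y,
        Ee Q x u w * (∑ n ∈ Finset.range (N + 1), Pb Q C t n w y)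
          ∂(trKer Q C (x, w)) :=
      measurable_inner Q hC t hSmeas u x
    calc (∑ n ∈ Finset.range (N + 2), Pb Q C t n u x) + rm Q C t (N + 1) u x
        = (Ee Q x u t
            + ∫⁻ w in Set.Ioo u t, ∫⁻ y,
              Ee Q x u w * (∑ n ∈ Finset.range (N + 1), Pb Q C t n w y)
                ∂(trKer Q C (x, w)))
          + ∫⁻ w in Set.Ioo u t, ∫⁻ y,
              Ee Q x u w * rm Q C t N w y ∂(trKer Q C (x, w)) := by
          rw [Finset.sum_range_succ', hsum]
          show _ + Pb Q C t 0 u x + _ = _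
          rw [add_comm (∫⁻ w in Set.Ioo u t, _ ∂_) (Pb Q C t 0 u x)]
          rfl
      _ = Ee Q x u t
          + ∫⁻ w in Set.Ioo u t,
            ((∫⁻ y, Ee Q x u w * (∑ n ∈ Finset.range (N + 1), Pb Q C t n w y)
                ∂(trKer Q C (x, w)))
              + ∫⁻ y, Ee Q x u w * rm Q C t N w y ∂(trKer Q C (x, w))) := by
          rw [add_assoc, ← lintegral_add_left hinner_meas]
      _ = Ee Q x u t
          + ∫⁻ w in Set.Ioo u t, Ee Q x u w * (trKer Q C (x, w)) Set.univ := by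
          refine congrArg _ (setLIntegral_congr_fun measurableSet_Ioo
            (fun w hw => ?_))
          have hmeas1 : Measurable fun y =>
              Ee Q x u w * (∑ n ∈ Finset.range (N + 1), Pb Q C t n w y) := by
            have h0 := Measurable.comp hSmeas (measurable_prodMk_left (x := w))
            have h1 : Measurable fun y => ∑ n ∈ Finset.range (N + 1), Pb Q C t n w y := h0
            exact h1.const_mul _
          rw [← lintegral_add_left hmeas1]
          have hptw : ∀ y, Ee Q x u w * (∑ n ∈ Finset.range (N + 1), Pb Q C t n w y)
              + Ee Q x u w * rm Q C t N w y = Ee Q x u w := by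
            intro y
            rw [← mul_add, ih w y (hu.trans hw.1.le) hw.2, mul_one]
          calc (∫⁻ y, (Ee Q x u w * (∑ n ∈ Finset.range (N + 1), Pb Q C t n w y)
                + Ee Q x u w * rm Q C t N w y) ∂(trKer Q C (x, w)))
              = ∫⁻ _, Ee Q x u w ∂(trKer Q C (x, w)) := lintegral_congr hptw
            _ = Ee Q x u w * (trKer Q C (x, w)) Set.univ := lintegral_const _
      _ = 1 := keyB Q hC hb ht x hu hut

/-- Remainder bound. -/
lemma rm_le (hC : C ≠ ⊤)
    (hb : ∀ (x : X) (w : ℝ), T₀ ≤ w → (w : EReal) < T₁ → Q.qp x w Set.univ ≤ C)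
    (ht : (t : EReal) < T₁) :
    ∀ (N : ℕ) (u : ℝ) (x : X), T₀ ≤ u → u < t →
      rm Q C t N u x ≤ ENNReal.ofReal
        ((C.toReal * (t - u)) ^ (N + 1) / (Nat.factorial (N + 1) : ℝ)) := by
  intro N
  induction N with
  | zero =>
    intro u x hu hut
    have hfio : IntegrableOn (Q.qrate x) (Set.Ioc u t) :=
      integrableOn_qrate Q hC hb ht x hu
    have hintf : IntervalIntegrable (Q.qrate x) volume u t := by
      rw [intervalIntegrable_iff_integrableOn_Ioc_of_le hut.le]
      exact hfio
    have hFle : (∫ θ in u..t, Q.qrate x θ) ≤ C.toReal * (t - u) := by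
      have hbd : ∀ θ ∈ Set.Icc u t, Q.qrate x θ ≤ C.toReal := by
        intro θ hθ
        refine ENNReal.toReal_mono hC (hb x θ (hu.trans hθ.1) ?_)
        exact lt_of_le_of_lt (EReal.coe_le_coe_iff.2 hθ.2) ht
      calc (∫ θ in u..t, Q.qrate x θ) ≤ ∫ _ in u..t, C.toReal :=
            intervalIntegral.integral_mono_on hut.le hintf
              intervalIntegrable_const hbd
        _ = C.toReal * (t - u) := by
            rw [intervalIntegral.integral_const, smul_eq_mul, mul_comm]
    have h0 : 0 ≤ ∫ θ in u..t, Q.qrate x θ :=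
      intervalIntegral.integral_nonneg hut.le (fun θ _ => qrate_nonneg Q x θ)
    show 1 - Ee Q x u t ≤ _
    rw [Ee, ← ENNReal.ofReal_one, ← ENNReal.ofReal_sub _ (Real.exp_pos _).le]
    have hle : 1 - Real.exp (-(∫ θ in u..t, Q.qrate x θ))
        ≤ (C.toReal * (t - u)) ^ (0 + 1) / (Nat.factorial (0 + 1) : ℝ) := by
      have h1 := Real.add_one_le_exp (-(∫ θ in u..t, Q.qrate x θ))
      have h2 : (C.toReal * (t - u)) ^ (0 + 1) / (Nat.factorial (0 + 1) : ℝ)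
          = C.toReal * (t - u) := by norm_num
      rw [h2]
      linarith [hFle]
    exact ENNReal.ofReal_le_ofReal hle
  | succ N ih =>
    intro u x hu hut
    have hCr0 : (0 : ℝ) ≤ C.toReal := ENNReal.toReal_nonneg
    show (∫⁻ w in Set.Ioo u t, ∫⁻ y,
        Ee Q x u w * rm Q C t N w y ∂(trKer Q C (x, w))) ≤ _
    have hg : Measurable fun w : ℝ => ENNReal.ofReal
        (C.toReal ^ (N + 2) * (t - w) ^ (N + 1) / (Nat.factorial (N + 1) : ℝ)) := by
      apply ENNReal.measurable_ofReal.comp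
      fun_prop
    have hbound : ∀ w ∈ Set.Ioo u t,
        (∫⁻ y, Ee Q x u w * rm Q C t N w y ∂(trKer Q C (x, w)))
          ≤ ENNReal.ofReal (C.toReal ^ (N + 2) * (t - w) ^ (N + 1) / (Nat.factorial (N + 1) : ℝ)) := by
      intro w hw
      have hwt : (0 : ℝ) ≤ t - w := by linarith [hw.2]
      calc (∫⁻ y, Ee Q x u w * rm Q C t N w y ∂(trKer Q C (x, w)))
          ≤ ∫⁻ _, ENNReal.ofReal ((C.toReal * (t - w)) ^ (N + 1) / (Nat.factorial (N + 1) : ℝ))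
              ∂(trKer Q C (x, w)) := by
            refine lintegral_mono fun y => ?_
            calc Ee Q x u w * rm Q C t N w y ≤ 1 * rm Q C t N w y :=
                  mul_le_mul_left (Ee_le_one Q x hw.1.le) _
              _ = rm Q C t N w y := one_mul _
              _ ≤ _ := ih w y (hu.trans hw.1.le) hw.2
        _ = ENNReal.ofReal ((C.toReal * (t - w)) ^ (N + 1) / (Nat.factorial (N + 1) : ℝ))
              * (trKer Q C (x, w)) Set.univ := lintegral_const _
        _ ≤ ENNReal.ofReal ((C.toReal * (t - w)) ^ (N + 1) / (Nat.factorial (N + 1) : ℝ)) * C :=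
              mul_le_mul_right (trKer_univ_le Q C (x, w)) _
        _ = ENNReal.ofReal ((C.toReal * (t - w)) ^ (N + 1) / (Nat.factorial (N + 1) : ℝ))
              * ENNReal.ofReal C.toReal := by rw [ENNReal.ofReal_toReal hC]
        _ = ENNReal.ofReal (C.toReal ^ (N + 2) * (t - w) ^ (N + 1) / (Nat.factorial (N + 1) : ℝ)) := by
            rw [← ENNReal.ofReal_mul (by positivity)]
            congr 1
            rw [mul_pow]
            ring
    calc (∫⁻ w in Set.Ioo u t, ∫⁻ y,
          Ee Q x u w * rm Q C t N w y ∂(trKer Q C (x, w)))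
        ≤ ∫⁻ w in Set.Ioo u t, ENNReal.ofReal
            (C.toReal ^ (N + 2) * (t - w) ^ (N + 1) / (Nat.factorial (N + 1) : ℝ)) :=
          setLIntegral_mono hg hbound
      _ = ENNReal.ofReal (∫ w in Set.Ioo u t,
            C.toReal ^ (N + 2) * (t - w) ^ (N + 1) / (Nat.factorial (N + 1) : ℝ)) := by
          have hpos : 0 ≤ᵐ[volume.restrict (Set.Ioo u t)] fun w =>
              C.toReal ^ (N + 2) * (t - w) ^ (N + 1) / (Nat.factorial (N + 1) : ℝ) := by
            filter_upwards [self_mem_ae_restrict measurableSet_Ioo] with w hw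
            have h5 : (0 : ℝ) ≤ t - w := by linarith [hw.2]
            positivity
          have hint2 : IntegrableOn (fun w => C.toReal ^ (N + 2) * (t - w) ^ (N + 1)
              / (Nat.factorial (N + 1) : ℝ)) (Set.Ioo u t) :=
            (Continuous.integrableOn_Icc (by continuity)).mono_set Set.Ioo_subset_Icc_self
          rw [← MeasureTheory.ofReal_integral_eq_lintegral_ofReal hint2 hpos]
      _ ≤ ENNReal.ofReal ((C.toReal * (t - u)) ^ (N + 2) / (Nat.factorial (N + 2) : ℝ)) := by
          refine ENNReal.ofReal_le_ofReal ?_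
          have hFTC : (∫ w in u..t, (t - w) ^ (N + 1))
              = (t - u) ^ (N + 2) / (N + 2) := by
            have hd : ∀ w : ℝ, HasDerivAt (fun w => -((t - w) ^ (N + 2) / (N + 2)))
                ((t - w) ^ (N + 1)) w := by
              intro w
              have h1 : HasDerivAt (fun w : ℝ => t - w) (-1) w :=
                (hasDerivAt_id w).const_sub t
              have h2 := (h1.pow (N + 2)).div_const ((N : ℝ) + 2)
              have h3 : HasDerivAt (fun w => -((t - w) ^ (N + 2) / ((N : ℝ) + 2))) _ w := h2.neg
              convert h3 using 1
              have hN2' : ((N : ℝ) + 2) ≠ 0 := by positivity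
              push_cast
              field_simp
            rw [intervalIntegral.integral_eq_sub_of_hasDerivAt (fun w _ => hd w)
              ((by continuity : Continuous fun w : ℝ => (t - w) ^ (N + 1)).intervalIntegrable
                u t)]
            simp
          have hIoo : (∫ w in Set.Ioo u t,
              C.toReal ^ (N + 2) * (t - w) ^ (N + 1) / (Nat.factorial (N + 1) : ℝ))
              = C.toReal ^ (N + 2) / (Nat.factorial (N + 1) : ℝ) * ((t - u) ^ (N + 2) / (N + 2)) := by
            rw [← hFTC, intervalIntegral.integral_of_le hut.le,
              MeasureTheory.integral_Ioc_eq_integral_Ioo, ← MeasureTheory.integral_const_mul]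
            refine setIntegral_congr_fun measurableSet_Ioo (fun w _ => ?_)
            ring
          rw [hIoo]
          have hfact : ((Nat.factorial (N + 2) : ℝ) : ℝ) = (N + 2) * (Nat.factorial (N + 1) : ℝ) := by
            rw [show N + 2 = (N + 1) + 1 from rfl, Nat.factorial_succ]
            push_cast
            ring
          rw [mul_pow, hfact]
          have hN2 : (0 : ℝ) < (N : ℝ) + 2 := by positivity
          have hfactpos : (0 : ℝ) < (Nat.factorial (N + 1) : ℝ) := by positivity
          apply le_of_eq
          rw [mul_div_assoc', div_mul_eq_mul_div, div_div,
            mul_comm ((Nat.factorial (N + 1) : ℝ)) ((N : ℝ) + 2)]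

/-- On the relevant region, Feller's iterates agree with the truncated-kernel iterates. -/
lemma pbarN_eq (hC : C ≠ ⊤)
    (hb : ∀ (x : X) (w : ℝ), T₀ ≤ w → (w : EReal) < T₁ → Q.qp x w Set.univ ≤ C)
    (ht : (t : EReal) < T₁) :
    ∀ (n : ℕ) (u : ℝ) (x : X), T₀ ≤ u → u < t →
      Q.PbarN n u x t Set.univ = Pb Q C t n u x := by
  intro n
  induction n with
  | zero =>
    intro u x hu hut
    show Set.indicator Set.univ
        (fun _ => ENNReal.ofReal (Real.exp (-(∫ s in u..t, Q.qrate x s)))) x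
      = Pb Q C t 0 u x
    rw [Set.indicator_of_mem (Set.mem_univ x)]
    rfl
  | succ n ih =>
    intro u x hu hut
    show (∫⁻ w in Set.Ioo u t, ∫⁻ y,
        ENNReal.ofReal (Real.exp (-(∫ θ in u..w, Q.qrate x θ))) * Q.PbarN n w y t Set.univ
          ∂(Q.qp x w)) = ∫⁻ w in Set.Ioo u t, ∫⁻ y,
        Ee Q x u w * Pb Q C t n w y ∂(trKer Q C (x, w))
    refine setLIntegral_congr_fun measurableSet_Ioo (fun w hw => ?_)
    have hwT : T₀ ≤ w := hu.trans hw.1.le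
    have hwT1 : (w : EReal) < T₁ := lt_of_le_of_lt (EReal.coe_le_coe_iff.2 hw.2.le) ht
    rw [trKer_apply Q C (hb x w hwT hwT1)]
    refine lintegral_congr fun y => ?_
    rw [ih w y hwT hw.2]
    rfl

end Main

end PbarRegAux

/-- if the jump rates of a conservative Q-function are uniformly bounded,
`sup { q(x,t) : x ∈ X, t ∈ [T₀,T₁) } < ∞`, then the transition function `P̄` is regular:
`Σ_{n=0}^∞ P̄⁽ⁿ⁾(u,x;t,X) = 1` for all `u ∈ [T₀,T₁)`, `t ∈ (u,T₁)` and `x ∈ X`. -/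
theorem pbar_regular_of_bounded_rates
    {X : Type*} [MeasurableSpace X] [StandardBorelSpace X]
    {T₀ : ℝ} {T₁ : EReal} (hT : (T₀ : EReal) < T₁)
    (Q : ConsQFun X T₀ T₁)
    (hbdd : ∃ C : ℝ≥0∞, C ≠ ⊤ ∧ ∀ (x : X) (t : ℝ), T₀ ≤ t → (t : EReal) < T₁ →
      Q.qp x t Set.univ ≤ C) :
    ∀ (u t : ℝ) (x : X), T₀ ≤ u → u < t → (t : EReal) < T₁ →
      Q.Pbar u x t Set.univ = 1 := by
  obtain ⟨C, hC, hb⟩ := hbdd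
  intro u t x hu hut ht
  have heq : Q.Pbar u x t Set.univ = ∑' n, PbarRegAux.Pb Q C t n u x := by
    rw [ConsQFun.Pbar]
    exact tsum_congr fun n => PbarRegAux.pbarN_eq Q hC hb ht n u x hu hut
  rw [heq, ENNReal.tsum_eq_iSup_sum]
  have hpartial : ∀ N : ℕ,
      (∑ n ∈ Finset.range (N + 1), PbarRegAux.Pb Q C t n u x)
        + PbarRegAux.rm Q C t N u x = 1 :=
    fun N => PbarRegAux.sum_add_rm Q hC hb ht N u x hu hut
  have hle1 : ∀ s : Finset ℕ, (∑ n ∈ s, PbarRegAux.Pb Q C t n u x) ≤ 1 := by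
    intro s
    obtain ⟨N, hN⟩ : ∃ N, s ⊆ Finset.range (N + 1) :=
      ⟨s.sup id, fun i hi => Finset.mem_range.2 (Nat.lt_succ_of_le (Finset.le_sup (f := id) hi))⟩
    calc (∑ n ∈ s, PbarRegAux.Pb Q C t n u x)
        ≤ ∑ n ∈ Finset.range (N + 1), PbarRegAux.Pb Q C t n u x :=
          Finset.sum_le_sum_of_subset hN
      _ ≤ (∑ n ∈ Finset.range (N + 1), PbarRegAux.Pb Q C t n u x)
          + PbarRegAux.rm Q C t N u x := le_self_add
      _ = 1 := hpartial N
  refine le_antisymm (iSup_le hle1) ?_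
  -- lower bound
  have htsum_le : (⨆ s : Finset ℕ, ∑ n ∈ s, PbarRegAux.Pb Q C t n u x) ≤ 1 :=
    iSup_le hle1
  refine ENNReal.le_of_forall_pos_le_add fun ε hε hlt => ?_
  -- find N with remainder small
  have htend : Filter.Tendsto
      (fun N : ℕ => (C.toReal * (t - u)) ^ (N + 1) / (Nat.factorial (N + 1) : ℝ))
      Filter.atTop (nhds 0) := by
    have h1 := FloorSemiring.tendsto_pow_div_factorial_atTop (C.toReal * (t - u))
    exact h1.comp (Filter.tendsto_add_atTop_nat 1)
  obtain ⟨N, hN⟩ := (htend.eventually (eventually_lt_nhds (show (0:ℝ) < ε by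
    exact_mod_cast hε))).exists
  have hrm : PbarRegAux.rm Q C t N u x ≤ (ε : ℝ≥0∞) := by
    refine le_trans (PbarRegAux.rm_le Q hC hb ht N u x hu hut) ?_
    rw [← ENNReal.ofReal_coe_nnreal]
    exact ENNReal.ofReal_le_ofReal hN.le
  have hSle : (∑ n ∈ Finset.range (N + 1), PbarRegAux.Pb Q C t n u x)
      ≤ ⨆ s : Finset ℕ, ∑ n ∈ s, PbarRegAux.Pb Q C t n u x :=
    le_iSup (fun s : Finset ℕ => ∑ n ∈ s, PbarRegAux.Pb Q C t n u x) (Finset.range (N + 1))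
  calc (1 : ℝ≥0∞) = (∑ n ∈ Finset.range (N + 1), PbarRegAux.Pb Q C t n u x)
        + PbarRegAux.rm Q C t N u x := (hpartial N).symm
    _ ≤ (⨆ s : Finset ℕ, ∑ n ∈ s, PbarRegAux.Pb Q C t n u x) + ε :=
      add_le_add hSle hrm
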